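/- Assume b > 0 and that there exists N* > 0 with N*·I(N*) = 1 such that N < 1/I(N) for every N ≥ 0 with N ≠ N*. Then for any firing rate sequence {N_{k,∞}}: if N_{0,∞} > N* the sequence is monotone increasing and tends to +∞, and if N_{0,∞} ≤ N* the sequence is monotone increasing and converges to N*. -/

import Mathlib

open MeasureTheory Real Filter

/-- The function `I(N)` from the NNLIF model. -/
noncomputable def Ifun (b V_R V_F N : ℝ) : ℝ :=
  ∫ v in Set.Iic V_F,
    Real.exp (-(v - b * N) ^ 2 / 2) * ∫ w in (max v V_R)..V_F, Real.exp ((w - b * N) ^ 2 / 2)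


noncomputable def FRf (b V_R V_F N v : ℝ) : ℝ :=
  Real.exp (-(v - b * N) ^ 2 / 2) * ∫ w in (max v V_R)..V_F, Real.exp ((w - b * N) ^ 2 / 2)

lemma FRf_nonneg {V_R V_F : ℝ} (hV : V_R < V_F) (b N : ℝ) {v : ℝ} (hv : v ≤ V_F) :
    0 ≤ FRf b V_R V_F N v := by
  apply mul_nonneg (Real.exp_pos _).le
  exact intervalIntegral.integral_nonneg (max_le hv hV.le) (fun w _ => (Real.exp_pos _).le)

lemma FRf_le {V_R V_F : ℝ} (hV : V_R < V_F) (b N : ℝ) {v : ℝ} (hv : v ≤ V_F) :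
    FRf b V_R V_F N v ≤
      ((V_F - V_R) * Real.exp ((|V_R| + |V_F| + |b * N|) ^ 2 / 2)) *
        Real.exp (-(v - b * N) ^ 2 / 2) := by
  set C := Real.exp ((|V_R| + |V_F| + |b * N|) ^ 2 / 2) with hC
  rw [FRf, mul_comm]
  apply mul_le_mul_of_nonneg_right _ (Real.exp_pos _).le
  have hm : max v V_R ≤ V_F := max_le hv hV.le
  have h1 : ∫ w in (max v V_R)..V_F, Real.exp ((w - b * N) ^ 2 / 2)
      ≤ ∫ w in (max v V_R)..V_F, C := by
    apply intervalIntegral.integral_mono_on hm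
      (Continuous.intervalIntegrable (by fun_prop) _ _)
      (intervalIntegrable_const)
    intro w hw
    rw [hC]
    apply Real.exp_le_exp.mpr
    apply div_le_div_of_nonneg_right _ (by norm_num)
    have h2 : -(|V_R| + |V_F| + |b * N|) ≤ w - b * N := by
      have := neg_abs_le V_R
      have := le_abs_self (b * N)
      have := abs_nonneg V_F
      have hw1 := hw.1
      have : V_R ≤ w := le_trans (le_max_right v V_R) hw1
      linarith
    have h3 : w - b * N ≤ |V_R| + |V_F| + |b * N| := by
      have := le_abs_self V_F
      have := neg_abs_le (b * N)
      have := abs_nonneg V_R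
      have hw2 := hw.2
      linarith
    nlinarith [sq_le_sq' h2 h3]
  calc _ ≤ ∫ w in (max v V_R)..V_F, C := h1
    _ = (V_F - max v V_R) * C := by rw [intervalIntegral.integral_const, smul_eq_mul]
    _ ≤ (V_F - V_R) * C := by
        apply mul_le_mul_of_nonneg_right _ (Real.exp_pos _).le
        have := le_max_right v V_R
        linarith

lemma FRf_cont (b V_R V_F : ℝ) :
    Continuous (fun p : ℝ × ℝ => FRf b V_R V_F p.1 p.2) := by
  unfold FRf
  apply Continuous.mul
  · fun_prop
  · have h1 : Continuous (fun p : ℝ × ℝ =>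
        ∫ w in V_F..(max p.2 V_R), Real.exp ((w - b * p.1) ^ 2 / 2)) := by
      apply intervalIntegral.continuous_parametric_intervalIntegral_of_continuous
      · fun_prop
      · fun_prop
    have h2 : (fun p : ℝ × ℝ =>
        ∫ w in (max p.2 V_R)..V_F, Real.exp ((w - b * p.1) ^ 2 / 2))
        = fun p => -∫ w in V_F..(max p.2 V_R), Real.exp ((w - b * p.1) ^ 2 / 2) := by
      funext p
      rw [intervalIntegral.integral_symm]
    rw [h2]
    exact h1.neg

lemma FRf_integrable {V_R V_F : ℝ} (hV : V_R < V_F) (b N : ℝ) :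
    IntegrableOn (FRf b V_R V_F N) (Set.Iic V_F) := by
  set K := (V_F - V_R) * Real.exp ((|V_R| + |V_F| + |b * N|) ^ 2 / 2) with hK
  have hg : Integrable (fun v : ℝ => K * Real.exp (-(v - b * N) ^ 2 / 2)) := by
    have h0 : Integrable (fun x : ℝ => Real.exp (-(1/2 : ℝ) * x ^ 2)) :=
      integrable_exp_neg_mul_sq (by norm_num)
    have h1 : Integrable (fun x : ℝ => Real.exp (-(1/2 : ℝ) * (x - b * N) ^ 2)) :=
      h0.comp_sub_right (b * N)
    have h2 : (fun v : ℝ => K * Real.exp (-(v - b * N) ^ 2 / 2))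
        = fun x : ℝ => K * Real.exp (-(1/2 : ℝ) * (x - b * N) ^ 2) := by
      funext x; ring_nf
    rw [h2]
    exact h1.const_mul K
  apply Integrable.mono' hg.restrict
  · exact ((FRf_cont b V_R V_F).comp (by fun_prop :
      Continuous fun v : ℝ => ((N : ℝ), v))).aestronglyMeasurable
  · rw [ae_restrict_iff' measurableSet_Iic]
    apply ae_of_all
    intro v hv
    rw [Real.norm_eq_abs, abs_of_nonneg (FRf_nonneg hV b N hv)]
    exact FRf_le hV b N hv

lemma FRf_anti {V_R V_F b : ℝ} (hV : V_R < V_F) (hb : 0 < b) {N₁ N₂ : ℝ} (h12 : N₁ ≤ N₂)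
    {v : ℝ} (hv : v ≤ V_F) : FRf b V_R V_F N₂ v ≤ FRf b V_R V_F N₁ v := by
  have hm : max v V_R ≤ V_F := max_le hv hV.le
  have key : ∀ N : ℝ, FRf b V_R V_F N v
      = ∫ w in (max v V_R)..V_F, Real.exp (-(v - b * N) ^ 2 / 2 + (w - b * N) ^ 2 / 2) := by
    intro N
    rw [FRf, ← intervalIntegral.integral_const_mul]
    congr 1
    funext w
    rw [← Real.exp_add]
  rw [key N₁, key N₂]
  apply intervalIntegral.integral_mono_on hm
    (Continuous.intervalIntegrable (by fun_prop) _ _)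
    (Continuous.intervalIntegrable (by fun_prop) _ _)
  intro w hw
  apply Real.exp_le_exp.mpr
  have hwv : v ≤ w := le_trans (le_max_left v V_R) hw.1
  nlinarith [mul_nonneg (mul_nonneg (sub_nonneg.mpr hwv) hb.le) (sub_nonneg.mpr h12)]

lemma Ifun_eq (b V_R V_F N : ℝ) : Ifun b V_R V_F N = ∫ v in Set.Iic V_F, FRf b V_R V_F N v := rfl

lemma Ifun_pos {V_R V_F : ℝ} (hV : V_R < V_F) (b N : ℝ) : 0 < Ifun b V_R V_F N := by
  rw [Ifun_eq]
  rw [setIntegral_pos_iff_support_of_nonneg_ae _ (FRf_integrable hV b N)]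
  · apply lt_of_lt_of_le _ (measure_mono (_ : Set.Iio V_F ⊆ _))
    · simp [Real.volume_Iio]
    · intro v hv
      have hv' : v < V_F := hv
      constructor
      · apply ne_of_gt
        apply mul_pos (Real.exp_pos _)
        exact intervalIntegral.intervalIntegral_pos_of_pos_on
          (Continuous.intervalIntegrable (by fun_prop) _ _)
          (fun w _ => Real.exp_pos _) (max_lt hv' hV)
      · exact hv'.le
  · exact (ae_restrict_iff' measurableSet_Iic).mpr (ae_of_all _ (fun v hv => FRf_nonneg hV b N hv))

lemma Ifun_anti {V_R V_F b : ℝ} (hV : V_R < V_F) (hb : 0 < b) {N₁ N₂ : ℝ} (h12 : N₁ ≤ N₂) :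
    Ifun b V_R V_F N₂ ≤ Ifun b V_R V_F N₁ := by
  rw [Ifun_eq, Ifun_eq]
  exact setIntegral_mono_on (FRf_integrable hV b N₂) (FRf_integrable hV b N₁)
    measurableSet_Iic (fun v hv => FRf_anti hV hb h12 hv)

set_option maxHeartbeats 1000000 in
lemma Ifun_tendsto {V_R V_F b : ℝ} (hV : V_R < V_F) (hb : 0 < b) {L : ℝ} {u : ℕ → ℝ}
    (hu0 : ∀ n, u 0 ≤ u n) (hL : Tendsto u atTop (nhds L)) :
    Tendsto (fun n => Ifun b V_R V_F (u n)) atTop (nhds (Ifun b V_R V_F L)) := by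
  simp only [Ifun_eq]
  apply tendsto_integral_of_dominated_convergence (FRf b V_R V_F (u 0))
  · intro n
    exact ((FRf_cont b V_R V_F).comp (by fun_prop :
      Continuous fun v : ℝ => ((u n : ℝ), v))).aestronglyMeasurable
  · exact FRf_integrable hV b (u 0)
  · intro n
    rw [ae_restrict_iff' measurableSet_Iic]
    apply ae_of_all
    intro v hv
    rw [Real.norm_eq_abs, abs_of_nonneg (FRf_nonneg hV b (u n) hv)]
    exact FRf_anti hV hb (hu0 n) hv
  · apply ae_of_all
    intro v
    have h := ((FRf_cont b V_R V_F).tendsto (L, v)).comp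
      (hL.prodMk_nhds (tendsto_const_nhds : Tendsto (fun _ : ℕ => v) atTop (nhds v)))
    exact h

/-- Case 1(b) of Theorem 2.3: `b > 0`, one equilibrium `N*`, with `1/I` staying on one side
of the diagonal (`N < 1/I(N)` for `N ≠ N*`). Firing rate sequences starting above `N*`
increase and diverge to `+∞`, and those starting below `N*` increase to `N*`. -/
theorem firingRateSeq_tangent_case (b V_R V_F : ℝ) (hV : V_R < V_F) (hb : 0 < b)
    (Nstar : ℝ) (hNstar : 0 < Nstar)
    (hfix : Nstar * Ifun b V_R V_F Nstar = 1)
    (hside : ∀ N : ℝ, 0 ≤ N → N ≠ Nstar → N < 1 / Ifun b V_R V_F N)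
    (Nseq : ℕ → ℝ) (h0 : 0 ≤ Nseq 0)
    (hrec : ∀ k : ℕ, Nseq (k + 1) = 1 / Ifun b V_R V_F (Nseq k)) :
    (Nstar < Nseq 0 →
      Monotone Nseq ∧ Tendsto Nseq atTop atTop) ∧
    (Nseq 0 ≤ Nstar →
      Monotone Nseq ∧ Tendsto Nseq atTop (nhds Nstar)) := by
  have hIpos : ∀ N : ℝ, 0 < Ifun b V_R V_F N := fun N => Ifun_pos hV b N
  have hIstar : Ifun b V_R V_F Nstar = 1 / Nstar := eq_one_div_of_mul_eq_one_left (by linarith [mul_comm Nstar (Ifun b V_R V_F Nstar)])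
  have hGstar : 1 / Ifun b V_R V_F Nstar = Nstar := by
    rw [hIstar, one_div_one_div]
  have hnonneg : ∀ k, 0 ≤ Nseq k := by
    intro k
    cases k with
    | zero => exact h0
    | succ n => rw [hrec n]; exact le_of_lt (by apply div_pos one_pos (hIpos _))
  have hmono : Monotone Nseq := by
    apply monotone_nat_of_le_succ
    intro k
    by_cases h : Nseq k = Nstar
    · rw [hrec k, h, hGstar]
    · exact (by rw [hrec k]; exact (hside _ (hnonneg k) h).le)
  have hu0 : ∀ n, Nseq 0 ≤ Nseq n := fun n => hmono (Nat.zero_le n)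
  have key : ∀ L : ℝ, Tendsto Nseq atTop (nhds L) → L = Nstar := by
    intro L hL
    have hL0 : 0 ≤ L := ge_of_tendsto' hL hnonneg
    have hIt : Tendsto (fun n => Ifun b V_R V_F (Nseq n)) atTop
        (nhds (Ifun b V_R V_F L)) := Ifun_tendsto hV hb hu0 hL
    have hdiv : Tendsto (fun n => 1 / Ifun b V_R V_F (Nseq n)) atTop
        (nhds (1 / Ifun b V_R V_F L)) :=
      Filter.Tendsto.div tendsto_const_nhds hIt (hIpos L).ne'
    have hshift : Tendsto (fun n => Nseq (n + 1)) atTop (nhds L) :=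
      hL.comp (tendsto_add_atTop_nat 1)
    have hshift' : Tendsto (fun n => 1 / Ifun b V_R V_F (Nseq n)) atTop (nhds L) := by
      have : (fun n => Nseq (n + 1)) = fun n => 1 / Ifun b V_R V_F (Nseq n) := by
        funext n; exact hrec n
      rwa [this] at hshift
    have hfixL : L = 1 / Ifun b V_R V_F L := tendsto_nhds_unique hshift' hdiv
    by_contra h
    exact absurd hfixL (ne_of_lt (hside L hL0 h))
  constructor
  · intro hgt
    refine ⟨hmono, ?_⟩
    rcases tendsto_of_monotone hmono with h | ⟨L, hL⟩
    · exact h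
    · exfalso
      have h1 : Nseq 0 ≤ L := ge_of_tendsto' hL hu0
      have h2 := key L hL
      linarith
  · intro hle
    have hub : ∀ k, Nseq k ≤ Nstar := by
      intro k
      induction k with
      | zero => exact hle
      | succ n ih =>
        rw [hrec n, ← hGstar]
        apply one_div_le_one_div_of_le (hIpos Nstar)
        exact Ifun_anti hV hb ih
    refine ⟨hmono, ?_⟩
    rcases tendsto_of_monotone hmono with h | ⟨L, hL⟩
    · exfalso
      obtain ⟨k, hk⟩ := (h.eventually_gt_atTop Nstar).exists
      exact absurd (hub k) (not_le.mpr hk)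
    · rw [← key L hL]; exact hL
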